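/- Let G be a graph on n vertices with girth at least 5 and spectral radius μ satisfying μ² = n − 1. Then G is either a star K_{1,n−1} or a Moore graph of diameter 2 (a d-regular graph on n = d² + 1 vertices with girth 5). -/

import Mathlib

open SimpleGraph Matrix Finset
section helpers
variable {V : Type*} [Fintype V] [DecidableEq V] {G : SimpleGraph V} [DecidableRel G.Adj]

private lemma egirth_le_len' {x : V} (w : G.Walk x x) (hw : w.IsCycle) : G.egirth ≤ w.length :=
  calc G.egirth ≤ ⨅ (w' : G.Walk x x), ⨅ _ : w'.IsCycle, (w'.length : ℕ∞) := iInf_le _ x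
    _ ≤ ⨅ _ : w.IsCycle, (w.length : ℕ∞) := iInf_le _ w
    _ ≤ w.length := iInf_le _ hw

private lemma len_ge' (hg : 5 ≤ G.girth) {x : V} (w : G.Walk x x) (hw : w.IsCycle) :
    5 ≤ w.length := by
  have h := ENat.toNat_le_toNat (egirth_le_len' w hw) (by simp)
  simpa [SimpleGraph.girth] using hg.trans h

private lemma no_tri' (hg : 5 ≤ G.girth) {a b c : V} (h1 : G.Adj a b) (h2 : G.Adj b c)
    (h3 : G.Adj c a) : False := by
  have hc : (SimpleGraph.Walk.cons h1 (.cons h2 (.cons h3 .nil))).IsCycle := by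
    simp [Walk.isCycle_def, Walk.isTrail_def, List.nodup_cons, h1.ne, h2.ne, h3.ne, h1.ne',
      h2.ne', h3.ne', Sym2.eq, Sym2.rel_iff']
  have := len_ge' hg _ hc
  simp at this

private lemma no_quad' (hg : 5 ≤ G.girth) {a b c d : V} (h1 : G.Adj a b) (h2 : G.Adj b c)
    (h3 : G.Adj c d) (h4 : G.Adj d a) (hac : a ≠ c) (hbd : b ≠ d) : False := by
  have hc : (SimpleGraph.Walk.cons h1 (.cons h2 (.cons h3 (.cons h4 .nil)))).IsCycle := by
    simp [Walk.isCycle_def, Walk.isTrail_def, List.nodup_cons, h1.ne, h2.ne, h3.ne, h4.ne,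
      h1.ne', h2.ne', h3.ne', h4.ne', hac, hbd, hac.symm, hbd.symm, Sym2.eq, Sym2.rel_iff']
  have := len_ge' hg _ hc
  simp at this

private lemma girth5' (hg : 5 ≤ G.girth) {a b c d e : V} (h1 : G.Adj a b) (h2 : G.Adj b c)
    (h3 : G.Adj c d) (h4 : G.Adj d e) (h5 : G.Adj e a) (hac : a ≠ c) (had : a ≠ d)
    (hbd : b ≠ d) (hbe : b ≠ e) (hce : c ≠ e) : G.girth = 5 := by
  have hc : (SimpleGraph.Walk.cons h1 (.cons h2 (.cons h3 (.cons h4 (.cons h5 .nil))))).IsCycle := by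
    simp [Walk.isCycle_def, Walk.isTrail_def, List.nodup_cons, h1.ne, h2.ne, h3.ne, h4.ne, h5.ne,
      h1.ne', h2.ne', h3.ne', h4.ne', h5.ne', hac, hbd, hac.symm, hbd.symm, had, had.symm,
      hbe, hbe.symm, hce, hce.symm, Sym2.eq, Sym2.rel_iff']
  have h := ENat.toNat_le_toNat (egirth_le_len' _ hc) (by simp)
  have hlen : (Walk.cons h1 (.cons h2 (.cons h3 (.cons h4 (.cons h5 .nil))))).length = 5 := by
    simp
  rw [hlen] at h
  simp only [SimpleGraph.girth] at hg ⊢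
  simp at h
  omega

private lemma star_of_dom (hg : 5 ≤ G.girth) (c : V) (hdom : ∀ v, v ≠ c → G.Adj c v) :
    ∀ u v : V, G.Adj u v ↔ ((u = c ∧ v ≠ c) ∨ (v = c ∧ u ≠ c)) := by
  intro p q
  constructor
  · intro h
    by_cases hp : p = c
    · exact Or.inl ⟨hp, by subst hp; exact h.ne'⟩
    by_cases hq : q = c
    · exact Or.inr ⟨hq, hp⟩
    exact (no_tri' hg (hdom p hp) h (hdom q hq).symm).elim
  · rintro (⟨rfl, hq⟩ | ⟨rfl, hp⟩)
    · exact hdom q hq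
    · exact (hdom p hp).symm

private lemma hasEig' {A : Matrix V V ℝ} (hA : A.IsHermitian) (i : V) :
    Module.End.HasEigenvalue (Matrix.toLin' A) (hA.eigenvalues i) := by
  apply Module.End.hasEigenvalue_of_hasEigenvector (x := ⇑(hA.eigenvectorBasis i))
  refine ⟨?_, ?_⟩
  · rw [Module.End.mem_eigenspace_iff, Matrix.toLin'_apply, hA.mulVec_eigenvectorBasis]
  · intro h
    exact hA.eigenvectorBasis.orthonormal.ne_zero i (by ext j; exact congrFun h j)

private lemma trace_eq' {A : Matrix V V ℝ} (hA : A.IsHermitian) :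
    A.trace = ∑ i, hA.eigenvalues i := by
  conv_lhs => rw [hA.spectral_theorem, Unitary.conjStarAlgAut_apply]
  rw [Matrix.trace_mul_cycle,
    show (star (hA.eigenvectorUnitary : Matrix V V ℝ)) * (hA.eigenvectorUnitary : Matrix V V ℝ)
      = 1 from Unitary.coe_star_mul_self _]
  simp [Matrix.trace_diagonal]

end helpers

/-- `μ` is the largest eigenvalue (spectral radius) of the adjacency matrix of `G`. -/
def IsSpectralRadius {V : Type*} [Fintype V] [DecidableEq V] (G : SimpleGraph V)
    [DecidableRel G.Adj] (μ : ℝ) : Prop :=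
  Module.End.HasEigenvalue (Matrix.toLin' (G.adjMatrix ℝ)) μ ∧
    ∀ x : ℝ, Module.End.HasEigenvalue (Matrix.toLin' (G.adjMatrix ℝ)) x → x ≤ μ

theorem stmt4 {V : Type*} [Fintype V] [DecidableEq V] (G : SimpleGraph V)
    [DecidableRel G.Adj] (μ : ℝ) (hμ : IsSpectralRadius G μ)
    (hg : 5 ≤ G.girth) (heq : μ ^ 2 = (Fintype.card V : ℝ) - 1) :
    (∃ c : V, ∀ u v : V, G.Adj u v ↔ ((u = c ∧ v ≠ c) ∨ (v = c ∧ u ≠ c))) ∨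
      (∃ d : ℕ, G.IsRegularOfDegree d ∧ G.girth = 5 ∧
        Fintype.card V = d ^ 2 + 1) := by
  classical
  set n := Fintype.card V with hn
  set A := G.adjMatrix ℝ with hAdef
  have hAapp : ∀ a b, A a b = if G.Adj a b then 1 else 0 := fun a b => by
    rw [hAdef, SimpleGraph.adjMatrix_apply]
  have hA0 : ∀ a b, 0 ≤ A a b := by
    intro a b; rw [hAapp]; split <;> norm_num
  have hA1 : ∀ a b, A a b ≤ 1 := by
    intro a b; rw [hAapp]; split <;> norm_num
  have hsymm : ∀ a b, A a b = A b a := by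
    intro a b; rw [hAapp, hAapp]; simp [adj_comm]
  have hAadj : ∀ a b, A a b ≠ 0 → G.Adj a b := by
    intro a b h; rw [hAapp] at h
    by_contra hn'; simp [hn'] at h
  have hA : A.IsHermitian := by
    ext a b
    simp only [Matrix.conjTranspose_apply, RCLike.star_def, starRingEnd_apply, star_trivial]
    exact hsymm b a
  have hmv : ∀ (z : V → ℝ) (v : V), (A *ᵥ z) v = ∑ w, A v w * z w := fun z v => rfl
  -- G is not acyclic, so there are at least 3 vertices
  have hnac : ¬ G.IsAcyclic := by
    intro h
    rw [h.girth_eq_zero] at hg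
    omega
  obtain ⟨a₀, w₀, hw₀, -⟩ := (SimpleGraph.exists_girth_eq_length).mpr hnac
  have hn3 : 3 ≤ n := by
    have h1 : 3 ≤ w₀.length := hw₀.three_le_length
    have h2 : w₀.support.tail.Nodup := hw₀.support_nodup
    have h3 : w₀.support.tail.length ≤ n := h2.length_le_card
    have h4 : w₀.support.length = w₀.length + 1 := w₀.length_support
    have h5 : w₀.support.tail.length = w₀.support.length - 1 := w₀.support.length_tail
    omega
  have hnR : (3 : ℝ) ≤ (n : ℝ) := by exact_mod_cast hn3
  have hne : Nonempty V := Fintype.card_pos_iff.mp (by omega)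
  -- μ ≥ 1
  have hμ0 : 0 ≤ μ := by
    by_contra hneg
    push_neg at hneg
    have hle : ∀ i : V, hA.eigenvalues i ≤ μ := fun i => hμ.2 _ (hasEig' hA i)
    have hsum : ∑ i, hA.eigenvalues i = 0 := by
      rw [← trace_eq' hA, hAdef]
      exact SimpleGraph.trace_adjMatrix ℝ G
    have hb : ∑ i : V, hA.eigenvalues i ≤ (univ.card : ℕ) • μ :=
      Finset.sum_le_card_nsmul univ _ μ (fun i _ => hle i)
    rw [hsum, Finset.card_univ, nsmul_eq_mul] at hb
    nlinarith
  have hμ1 : 1 ≤ μ := by nlinarith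
  -- Perron-type vector
  obtain ⟨y, hy⟩ := hμ.1.exists_hasEigenvector
  have hyA : A *ᵥ y = μ • y := by
    have := hy.apply_eq_smul
    rwa [Matrix.toLin'_apply] at this
  set x : V → ℝ := fun v => |y v| with hxdef
  have hx0 : ∀ v, 0 ≤ x v := fun v => abs_nonneg _
  have hxne : ∃ v, x v ≠ 0 := by
    obtain ⟨v, hv⟩ := Function.ne_iff.mp hy.2
    exact ⟨v, by simpa [hxdef] using hv⟩
  have hineq : ∀ v, μ * x v ≤ (A *ᵥ x) v := by
    intro v
    have h1 : |(A *ᵥ y) v| = μ * x v := by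
      rw [hyA]
      simp [hxdef, abs_mul, abs_of_nonneg hμ0]
    rw [← h1, hmv y v, hmv x v]
    calc |∑ w, A v w * y w| ≤ ∑ w, |A v w * y w| := Finset.abs_sum_le_sum_abs _ _
      _ = ∑ w, A v w * x w := by
          refine Finset.sum_congr rfl fun w _ => ?_
          rw [abs_mul, abs_of_nonneg (hA0 v w)]
  -- argmax
  obtain ⟨u, -, hu⟩ := Finset.exists_max_image (univ : Finset V) x univ_nonempty
  have hu' : ∀ v, x v ≤ x u := fun v => hu v (mem_univ v)
  have hxu : 0 < x u := by
    obtain ⟨v, hv⟩ := hxne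
    exact lt_of_lt_of_le (lt_of_le_of_ne (hx0 v) (Ne.symm hv)) (hu' v)
  -- the key equality analysis at any maximal vertex
  have key : ∀ m : V, x m = x u →
      (μ * x m = (A *ᵥ x) m) ∧ (∀ w, G.Adj m w → μ * x w = (A *ᵥ x) w) ∧
      (∀ v, v ≠ m → ¬ G.Adj m v → (x v = x u ∧ ∃ w, G.Adj m w ∧ G.Adj w v)) := by
    intro m hm
    set c : V → ℝ := fun v => ∑ w, A m w * A w v with hcdef
    have hc0 : ∀ v, 0 ≤ c v := fun v =>
      Finset.sum_nonneg fun w _ => mul_nonneg (hA0 m w) (hA0 w v)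
    have hcadj : ∀ v, G.Adj m v → c v = 0 := by
      intro v hv
      refine Finset.sum_eq_zero fun w _ => ?_
      by_contra hne'
      rcases mul_ne_zero_iff.mp hne' with ⟨h1, h2⟩
      exact no_tri' hg (hAadj m w h1) (hAadj w v h2) hv.symm
    have hcle : ∀ v, v ≠ m → c v ≤ 1 := by
      intro v hvm
      by_cases hex : ∃ w, A m w * A w v ≠ 0
      · obtain ⟨w₀, hw₀'⟩ := hex
        have hval : c v = A m w₀ * A w₀ v := by
          refine Finset.sum_eq_single_of_mem w₀ (mem_univ _) fun w _ hwne => ?_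
          by_contra hne'
          rcases mul_ne_zero_iff.mp hne' with ⟨h1, h2⟩
          rcases mul_ne_zero_iff.mp hw₀' with ⟨h3, h4⟩
          exact no_quad' hg (hAadj m w h1) (hAadj w v h2) (hAadj w₀ v h4).symm
            (hAadj m w₀ h3).symm (Ne.symm hvm) hwne
        rw [hval]
        calc A m w₀ * A w₀ v ≤ 1 * 1 :=
              mul_le_mul (hA1 m w₀) (hA1 w₀ v) (hA0 w₀ v) zero_le_one
          _ = 1 := by norm_num
      · push_neg at hex
        have : c v = 0 := Finset.sum_eq_zero fun w _ => hex w
        rw [this]; norm_num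
    have hcm : c m = (G.degree m : ℝ) := by
      have h1 : ∀ w, A m w * A w m = A m w * (fun _ => (1:ℝ)) w := by
        intro w
        rw [← hsymm m w]
        rw [hAapp]
        split <;> norm_num
      calc c m = ∑ w, A m w * (fun _ => (1:ℝ)) w := Finset.sum_congr rfl fun w _ => h1 w
        _ = (A *ᵥ (fun _ => (1:ℝ))) m := (hmv _ m).symm
        _ = (G.degree m : ℝ) * 1 := SimpleGraph.adjMatrix_mulVec_const_apply
        _ = (G.degree m : ℝ) := by ring
    -- rearranged double sum
    have hS : (A *ᵥ (A *ᵥ x)) m = ∑ v, c v * x v := by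
      rw [hmv (A *ᵥ x) m]
      calc ∑ w, A m w * (A *ᵥ x) w = ∑ w, ∑ v, A m w * (A w v * x v) := by
            refine Finset.sum_congr rfl fun w _ => ?_
            rw [hmv x w, Finset.mul_sum]
        _ = ∑ v, ∑ w, A m w * (A w v * x v) := Finset.sum_comm
        _ = ∑ v, c v * x v := by
            refine Finset.sum_congr rfl fun v _ => ?_
            simp only [hcdef]
            rw [Finset.sum_mul]
            exact Finset.sum_congr rfl fun w _ => by ring
    -- the comparison function
    set g : V → ℝ := fun v => if v = m then (G.degree m : ℝ) * x u
      else if G.Adj m v then 0 else x u with hgdef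
    have hle : ∀ v ∈ (univ : Finset V), c v * x v ≤ g v := by
      intro v _
      simp only [hgdef]
      by_cases h1 : v = m
      · rw [if_pos h1, h1, hcm, hm]
      · rw [if_neg h1]
        by_cases h2 : G.Adj m v
        · rw [if_pos h2, hcadj v h2, zero_mul]
        · rw [if_neg h2]
          calc c v * x v ≤ 1 * x u :=
                mul_le_mul (hcle v h1) (hu' v) (hx0 v) zero_le_one
            _ = x u := one_mul _
    -- count of non-neighbors
    set T : Finset V := (univ.erase m).filter (fun v => ¬ G.Adj m v) with hTdef
    have hTcard : (G.degree m : ℝ) + (T.card : ℝ) = (n : ℝ) - 1 := by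
      have h1 : (univ.erase m).filter (fun v => G.Adj m v) = G.neighborFinset m := by
        ext v
        simp only [Finset.mem_filter, Finset.mem_erase, Finset.mem_univ, true_and,
          SimpleGraph.mem_neighborFinset, and_true]
        exact ⟨fun h => h.2, fun h => ⟨h.ne', h⟩⟩
      have h2 := Finset.card_filter_add_card_filter_not
        (s := univ.erase m) (p := fun v => G.Adj m v)
      rw [h1] at h2
      have h3 : (univ.erase m).card = n - 1 := by
        rw [Finset.card_erase_of_mem (mem_univ m), Finset.card_univ]
      rw [h3, SimpleGraph.card_neighborFinset_eq_degree] at h2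
      have h4 : G.degree m + T.card = n - 1 := h2
      have h5 : (1:ℕ) ≤ n := by omega
      have := congrArg (fun k : ℕ => (k : ℝ)) h4
      push_cast [Nat.cast_sub h5] at this
      linarith
    have hgsum : ∑ v, g v = ((n : ℝ) - 1) * x u := by
      rw [← Finset.sum_erase_add univ g (mem_univ m)]
      have hgm : g m = (G.degree m : ℝ) * x u := by simp [hgdef]
      have herase : ∑ v ∈ univ.erase m, g v = (T.card : ℝ) * x u := by
        have hcongr : ∀ v ∈ univ.erase m, g v = if G.Adj m v then 0 else x u := by
          intro v hv
          simp only [hgdef]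
          rw [if_neg (Finset.ne_of_mem_erase hv)]
        rw [Finset.sum_congr rfl hcongr, Finset.sum_ite, Finset.sum_const, Finset.sum_const]
        rw [← hTdef]
        simp [nsmul_eq_mul]
      rw [hgm, herase]
      nlinarith [hTcard]
    -- the chain of inequalities
    have chain2 : μ * ((A *ᵥ x) m) ≤ (A *ᵥ (A *ᵥ x)) m := by
      rw [hmv (A *ᵥ x) m, hmv x m, Finset.mul_sum]
      refine Finset.sum_le_sum fun w _ => ?_
      calc μ * (A m w * x w) = A m w * (μ * x w) := by ring
        _ ≤ A m w * ((A *ᵥ x) w) := mul_le_mul_of_nonneg_left (hineq w) (hA0 m w)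
    have chain1 : μ * (μ * x m) ≤ μ * ((A *ᵥ x) m) :=
      mul_le_mul_of_nonneg_left (hineq m) hμ0
    have hSle : μ * (μ * x m) ≤ ∑ v, c v * x v := by
      rw [← hS]; exact chain1.trans chain2
    have hend : ∑ v, g v = μ * (μ * x m) := by
      rw [hgsum, hm, ← heq]; ring
    have e3 : ∑ v, c v * x v = ∑ v, g v :=
      le_antisymm (Finset.sum_le_sum hle) (by rw [hend]; exact hSle)
    have eterm := (Finset.sum_eq_sum_iff_of_le hle).mp e3
    -- equality in chain1 and chain2
    have hA2 : (A *ᵥ (A *ᵥ x)) m = μ * (μ * x m) := by rw [hS, e3, hend]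
    have hbmid : μ * ((A *ᵥ x) m) = μ * (μ * x m) :=
      le_antisymm (chain2.trans_eq hA2) chain1
    have hμne : μ ≠ 0 := by linarith
    have k2 : μ * x m = (A *ᵥ x) m := (mul_left_cancel₀ hμne hbmid).symm
    refine ⟨k2, ?_, ?_⟩
    · -- equality at neighbors
      intro w hw
      have hLR : ∀ w' ∈ (univ : Finset V),
          A m w' * (μ * x w') ≤ A m w' * ((A *ᵥ x) w') := fun w' _ =>
        mul_le_mul_of_nonneg_left (hineq w') (hA0 m w')
      have hsums : ∑ w', A m w' * (μ * x w') = ∑ w', A m w' * ((A *ᵥ x) w') := by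
        have hL : ∑ w', A m w' * (μ * x w') = μ * ((A *ᵥ x) m) := by
          rw [hmv x m, Finset.mul_sum]
          exact Finset.sum_congr rfl fun w' _ => by ring
        have hR : ∑ w', A m w' * ((A *ᵥ x) w') = (A *ᵥ (A *ᵥ x)) m := (hmv _ m).symm
        rw [hL, hR, hA2, hbmid]
      have := (Finset.sum_eq_sum_iff_of_le hLR).mp hsums w (mem_univ w)
      have hAmw : A m w = 1 := by rw [hAapp, if_pos hw]
      rw [hAmw, one_mul, one_mul] at this
      exact this
    · -- non-neighbors
      intro v hvm hnadj
      have hgv : g v = x u := by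
        simp only [hgdef]
        rw [if_neg hvm, if_neg hnadj]
      have hcv : c v * x v = x u := by
        have := eterm v (mem_univ v)
        rwa [hgv] at this
      have hc1 : c v ≤ 1 := hcle v hvm
      have hxv : x v = x u := by nlinarith [hx0 v, hu' v, hc0 v]
      refine ⟨hxv, ?_⟩
      have hcne : c v ≠ 0 := by
        intro h
        rw [h, zero_mul] at hcv
        exact absurd hcv.symm (ne_of_gt hxu)
      obtain ⟨w, -, hw⟩ := Finset.exists_ne_zero_of_sum_ne_zero
        (f := fun w => A m w * A w v) (s := univ) (by simpa [hcdef] using hcne)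
      rcases mul_ne_zero_iff.mp hw with ⟨h1, h2⟩
      exact ⟨w, hAadj m w h1, hAadj w v h2⟩
  -- main case analysis
  by_cases hdom : ∀ v, v ≠ u → G.Adj u v
  · exact Or.inl ⟨u, star_of_dom hg u hdom⟩
  push_neg at hdom
  obtain ⟨v₀, hv₀ne, hv₀na⟩ := hdom
  have hv₀ : x v₀ = x u := ((key u rfl).2.2 v₀ hv₀ne hv₀na).1
  by_cases hall : ∀ v, x v = x u
  · -- regular case
    have hdeg : ∀ m : V, (G.degree m : ℝ) = μ := by
      intro m
      have k2 := (key m (hall m)).1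
      rw [SimpleGraph.adjMatrix_mulVec_apply] at k2
      have hsum : ∑ v ∈ G.neighborFinset m, x v = (G.degree m : ℝ) * x u := by
        rw [Finset.sum_congr rfl (fun v _ => hall v), Finset.sum_const,
          SimpleGraph.card_neighborFinset_eq_degree, nsmul_eq_mul]
      rw [hsum, hall m] at k2
      exact (mul_right_cancel₀ (ne_of_gt hxu) k2).symm
    set d := G.degree u with hd
    have hdμ : (d : ℝ) = μ := hdeg u
    have hreg : G.IsRegularOfDegree d := by
      intro v
      have := (hdeg v).trans hdμ.symm
      exact_mod_cast this
    have hcard : n = d ^ 2 + 1 := by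
      have h1 : (n : ℝ) = (d : ℝ) ^ 2 + 1 := by nlinarith
      exact_mod_cast h1
    have hd2 : 2 ≤ d := by
      by_contra hlt
      push_neg at hlt
      interval_cases d <;> omega
    -- construct a 5-cycle
    have hcardu : 1 < (G.neighborFinset u).card := by
      rw [SimpleGraph.card_neighborFinset_eq_degree]; omega
    obtain ⟨a, ha, b, hb, hab⟩ := Finset.one_lt_card.mp hcardu
    have hua : G.Adj u a := (SimpleGraph.mem_neighborFinset _ _ _).mp ha
    have hub : G.Adj u b := (SimpleGraph.mem_neighborFinset _ _ _).mp hb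
    have hcarda : 0 < ((G.neighborFinset a).erase u).card := by
      have h1 : u ∈ G.neighborFinset a := (SimpleGraph.mem_neighborFinset _ _ _).mpr hua.symm
      rw [Finset.card_erase_of_mem h1, SimpleGraph.card_neighborFinset_eq_degree, hreg a]
      omega
    obtain ⟨a', ha'⟩ := Finset.card_pos.mp hcarda
    rw [Finset.mem_erase, SimpleGraph.mem_neighborFinset] at ha'
    obtain ⟨ha'u, haa'⟩ := ha'
    have hna' : ¬ G.Adj u a' := fun h => no_tri' hg hua haa' h.symm
    have ha'b : a' ≠ b := fun h => hna' (h ▸ hub)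
    have hnb : ¬ G.Adj a' b := fun h =>
      no_quad' hg hua haa' h hub.symm (fun he => ha'u he.symm) hab
    obtain ⟨-, w, hw1, hw2⟩ := (key a' (hall a')).2.2 b ha'b.symm hnb
    have hwu : w ≠ u := fun h => hna' (h ▸ hw1).symm
    have hwa : w ≠ a := fun h => no_tri' hg hua (h ▸ hw2) hub.symm
    have hg5 : G.girth = 5 :=
      girth5' hg hua haa' hw1 hw2 hub.symm
        (fun he => ha'u he.symm) (Ne.symm hwu) (Ne.symm hwa) hab ha'b
    exact Or.inr ⟨d, hreg, hg5, hcard⟩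
  · push_neg at hall
    obtain ⟨w, hw⟩ := hall
    have hadjmax : ∀ p, x p ≠ x u → ∀ m, x m = x u → G.Adj m p := by
      intro p hp m hmx
      by_contra hna
      have hpm : p ≠ m := fun h => hp (h ▸ hmx)
      exact hp ((key m hmx).2.2 p hpm hna).1
    have hdomw : ∀ v, v ≠ w → G.Adj w v := by
      intro p hpw
      by_cases hxp : x p = x u
      · exact (hadjmax w hw p hxp).symm
      · exfalso
        have h1 : G.Adj u w := hadjmax w hw u rfl
        have h2 : G.Adj v₀ w := hadjmax w hw v₀ hv₀
        have h3 : G.Adj u p := hadjmax p hxp u rfl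
        have h4 : G.Adj v₀ p := hadjmax p hxp v₀ hv₀
        exact no_quad' hg h1 h2.symm h4 h3.symm (Ne.symm hv₀ne) (fun h => hpw h.symm)
    exact Or.inl ⟨w, star_of_dom hg w hdomw⟩
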